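/- For any c.e. set X ⊆ ℕ, the unidimensional ceer R_X (defined by x R_X y iff x = y or both x,y ∈ X) is dark—i.e., has infinitely many classes and no infinite c.e. transversal—if and only if X is simple. -/

import Mathlib

/-- A relation on ℕ is c.e. -/
def CeRel (R : ℕ → ℕ → Prop) : Prop := REPred fun p : ℕ × ℕ => R p.1 p.2

/-- A ceer: a c.e. equivalence relation on ℕ. -/
def Ceer (R : ℕ → ℕ → Prop) : Prop := Equivalence R ∧ CeRel R

/-- Computable reducibility of equivalence relations on ℕ. -/
def Reduces (R S : ℕ → ℕ → Prop) : Prop :=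
  ∃ f : ℕ → ℕ, Computable f ∧ ∀ x y, R x y ↔ S (f x) (f y)

/-- A transversal: a set of pairwise inequivalent numbers. -/
def IsTransversal (R : ℕ → ℕ → Prop) (T : Set ℕ) : Prop :=
  ∀ x ∈ T, ∀ y ∈ T, x ≠ y → ¬ R x y

/-- The principal transversal: least elements of equivalence classes. -/
def principalTransversal (R : ℕ → ℕ → Prop) : Set ℕ := {x | ∀ y < x, ¬ R y x}

/-- R has infinitely many equivalence classes. -/
def InfiniteClasses (R : ℕ → ℕ → Prop) : Prop :=
  {s : Set ℕ | ∃ x, s = {y | R x y}}.Infinite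

/-- A set is hyperimmune iff it is infinite and no computable function majorizes
its principal function (Kuznecov–Medvedev–Uspenskii characterization). -/
def Hyperimmune (A : Set ℕ) : Prop :=
  A.Infinite ∧ ¬ ∃ g : ℕ → ℕ, Computable g ∧ ∀ n, Nat.nth (· ∈ A) n ≤ g n

/-- A ceer is hyperdark if it has infinitely many classes and
all its infinite transversals are hyperimmune. -/
def Hyperdark (R : ℕ → ℕ → Prop) : Prop :=
  Ceer R ∧ InfiniteClasses R ∧
    ∀ T : Set ℕ, IsTransversal R T → T.Infinite → Hyperimmune T

/-- The unidimensional ceer determined by a set X ⊆ ℕ. -/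
def uniCeer (X : Set ℕ) : ℕ → ℕ → Prop :=
  fun x y => x = y ∨ (x ∈ X ∧ y ∈ X)

lemma repred_and_ne {T : Set ℕ} (h : REPred (· ∈ T)) (a : ℕ) :
    REPred (fun x => x ∈ T ∧ x ≠ a) := by
  have hne : REPred (fun x : ℕ => x ≠ a) := by
    apply ComputablePred.to_re
    exact ComputablePred.not (PrimrecRel.comp Primrec.eq Primrec.id (Primrec.const a)).computablePred
  have hb : Partrec fun x : ℕ =>
      (Part.assert (x ∈ T) fun _ => Part.some ()).bind
        fun _ => Part.assert (x ≠ a) fun _ => Part.some () :=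
    h.bind (hne.comp Computable.fst)
  exact hb.dom_re.of_eq fun x => by
    simp [Part.bind, Part.assert]

lemma infiniteClasses_uniCeer (X : Set ℕ) :
    InfiniteClasses (uniCeer X) ↔ Xᶜ.Infinite := by
  constructor
  · intro h
    by_contra hfin
    rw [Set.not_infinite] at hfin
    apply h
    have : {s : Set ℕ | ∃ x, s = {y | uniCeer X x y}} ⊆
        insert X ((fun x => ({x} : Set ℕ)) '' Xᶜ) := by
      rintro s ⟨x, rfl⟩
      by_cases hx : x ∈ X
      · left
        ext y
        simp only [uniCeer, Set.mem_setOf_eq]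
        constructor
        · rintro (rfl | ⟨_, hy⟩) <;> [exact hx; exact hy]
        · intro hy; exact Or.inr ⟨hx, hy⟩
      · right
        refine ⟨x, hx, ?_⟩
        ext y
        simp only [uniCeer, Set.mem_setOf_eq, Set.mem_singleton_iff]
        constructor
        · rintro rfl; exact Or.inl rfl
        · rintro (rfl | ⟨hx', _⟩)
          · rfl
          · exact absurd hx' hx
    exact Set.Finite.subset ((hfin.image _).insert X) this
  · intro h
    have : (fun x => ({x} : Set ℕ)) '' Xᶜ ⊆ {s : Set ℕ | ∃ x, s = {y | uniCeer X x y}} := by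
      rintro s ⟨x, hx, rfl⟩
      refine ⟨x, ?_⟩
      ext y
      simp only [uniCeer, Set.mem_setOf_eq, Set.mem_singleton_iff]
      constructor
      · rintro rfl; exact Or.inl rfl
      · rintro (rfl | ⟨hx', _⟩)
        · rfl
        · exact absurd hx' hx
    exact ((h.image (Set.injOn_of_injective (fun a b hab => by
      simpa using hab))).mono this)

/-- for a c.e. set X, the unidimensional ceer R_X is dark
(infinitely many classes and no infinite c.e. transversal) iff X is simple. -/
theorem uniCeer_dark_iff_simple (X : Set ℕ) (hX : REPred (· ∈ X)) :
    (InfiniteClasses (uniCeer X) ∧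
        ∀ T : Set ℕ, REPred (· ∈ T) → IsTransversal (uniCeer X) T → T.Finite) ↔
      (Xᶜ.Infinite ∧
        ∀ Y : Set ℕ, REPred (· ∈ Y) → Y.Infinite → (Y ∩ X).Nonempty) := by
  constructor
  · rintro ⟨hinf, hdark⟩
    refine ⟨(infiniteClasses_uniCeer X).1 hinf, fun Y hY hYinf => ?_⟩
    by_contra hempty
    rw [Set.not_nonempty_iff_eq_empty] at hempty
    have htrans : IsTransversal (uniCeer X) Y := by
      intro x hx y hy hxy
      rintro (rfl | ⟨hxX, _⟩)
      · exact hxy rfl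
      · exact absurd (Set.eq_empty_iff_forall_notMem.1 hempty x) (by simp [hx, hxX])
    exact hYinf (hdark Y hY htrans)
  · rintro ⟨hcoinf, hsimple⟩
    refine ⟨(infiniteClasses_uniCeer X).2 hcoinf, fun T hT htrans => ?_⟩
    by_contra hTinf
    replace hTinf : T.Infinite := hTinf
    obtain ⟨a, haT, haX⟩ := hsimple T hT hTinf
    set T' : Set ℕ := {x | x ∈ T ∧ x ≠ a} with hT'
    have hT're : REPred (· ∈ T') := repred_and_ne hT a
    have hT'inf : T'.Infinite := by
      have : T ⊆ T' ∪ {a} := fun x hx => by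
        by_cases hxa : x = a
        · exact Or.inr (by simp [hxa])
        · exact Or.inl ⟨hx, hxa⟩
      intro hfin
      exact hTinf (Set.Finite.subset (hfin.union (Set.finite_singleton a)) this)
    obtain ⟨b, ⟨hbT, hba⟩, hbX⟩ := hsimple T' hT're hT'inf
    exact htrans b hbT a haT hba (Or.inr ⟨hbX, haX⟩)
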